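/- Let g(y) = (y/2)(1 − √((2y−1)(3−2y))) for y ∈ [1, 3/2], which is strictly increasing from 0 to 3/4, and let α : [0, 3/4] → [1, 3/2] be its inverse. Define z(x,y) = 1 − y/α(xy) and Ω* = {(x,y) ∈ ℝ² : 3/4 < y < 1, 0 < x < 1/(4y)}. Then ∫∫_{Ω*} (∂z/∂x(x,y))² dx dy = +∞. -/

import Mathlib

open MeasureTheory Set Real

/-- g(y) = (y/2)·(1 − √((2y−1)(3−2y))) of Example 7. -/
noncomputable def gEx7 (y : ℝ) : ℝ :=
  y / 2 * (1 - Real.sqrt ((2 * y - 1) * (3 - 2 * y)))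

noncomputable def gEx7' (u : ℝ) : ℝ :=
  (1 - Real.sqrt ((2*u-1)*(3-2*u)))/2 + 2*u*(u-1)/Real.sqrt ((2*u-1)*(3-2*u))

lemma phi_eq (u : ℝ) : (2*u-1)*(3-2*u) = 1 - 4*(u-1)^2 := by ring

lemma phi_pos {u : ℝ} (hu : u ∈ Ioo (1:ℝ) (3/2)) : 0 < (2*u-1)*(3-2*u) := by
  obtain ⟨h1, h2⟩ := hu; nlinarith

lemma gEx7_hasDerivAt {u : ℝ} (hu : u ∈ Ioo (1:ℝ) (3/2)) :
    HasDerivAt gEx7 (gEx7' u) u := by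
  have hφ := phi_pos hu
  have hs : 0 < Real.sqrt ((2*u-1)*(3-2*u)) := Real.sqrt_pos.2 hφ
  have ha : HasDerivAt (fun v : ℝ => 2*v-1) 2 u := by
    simpa using ((hasDerivAt_id u).const_mul (2:ℝ)).sub_const 1
  have hb : HasDerivAt (fun v : ℝ => 3-2*v) (-2) u := by
    simpa using ((hasDerivAt_id u).const_mul (2:ℝ)).const_sub 3
  have h1 : HasDerivAt (fun v : ℝ => (2*v-1)*(3-2*v))
      (2*(3-2*u) + (2*u-1)*(-2)) u := ha.mul hb
  have h2 : HasDerivAt (fun v : ℝ => Real.sqrt ((2*v-1)*(3-2*v)))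
      (1/(2*Real.sqrt ((2*u-1)*(3-2*u))) * (2*(3-2*u) + (2*u-1)*(-2))) u :=
    (Real.hasDerivAt_sqrt hφ.ne').comp u h1
  have h3 : HasDerivAt (fun v : ℝ => v/2) (1/2) u := (hasDerivAt_id u).div_const 2
  have h4 := h3.mul (h2.const_sub 1)
  have : gEx7 = fun v : ℝ => v/2 * (1 - Real.sqrt ((2*v-1)*(3-2*v))) := rfl
  rw [this]
  refine h4.congr_deriv ?_
  unfold gEx7'
  field_simp
  ring

lemma gEx7'_pos {u : ℝ} (hu : u ∈ Ioo (1:ℝ) (3/2)) : 0 < gEx7' u := by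
  have hφ := phi_pos hu
  have hs : 0 < Real.sqrt ((2*u-1)*(3-2*u)) := Real.sqrt_pos.2 hφ
  have hlt : Real.sqrt ((2*u-1)*(3-2*u)) < 1 := by
    rw [Real.sqrt_lt' one_pos]
    nlinarith [hu.1, hu.2]
  have h1 : 0 < (1 - Real.sqrt ((2*u-1)*(3-2*u)))/2 := by linarith
  have h2 : 0 < 2*u*(u-1)/Real.sqrt ((2*u-1)*(3-2*u)) := by
    apply div_pos; nlinarith [hu.1]; exact hs
  unfold gEx7'; linarith

lemma gEx7_one : gEx7 1 = 0 := by
  unfold gEx7; norm_num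

lemma gEx7_threehalf : gEx7 (3/2) = 3/4 := by
  unfold gEx7; norm_num

lemma gEx7_strictMono : StrictMonoOn gEx7 (Icc 1 (3/2)) := by
  apply strictMonoOn_of_deriv_pos (convex_Icc _ _)
  · apply Continuous.continuousOn
    unfold gEx7
    fun_prop
  · intro x hx
    rw [interior_Icc] at hx
    rw [(gEx7_hasDerivAt hx).deriv]
    exact gEx7'_pos hx

lemma alpha_continuousAt (α : ℝ → ℝ)
    (hinv₂ : ∀ X ∈ Icc (0:ℝ) (3/4), α X ∈ Icc (1:ℝ) (3/2) ∧ gEx7 (α X) = X)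
    {X : ℝ} (hX : X ∈ Ioo (0:ℝ) (3/4)) : ContinuousAt α X := by
  have hmono := gEx7_strictMono
  obtain ⟨hu₀mem, hgu₀⟩ := hinv₂ X ⟨hX.1.le, hX.2.le⟩
  set u₀ := α X with hu₀def
  have hu₀gt : 1 < u₀ := by
    rcases lt_or_eq_of_le hu₀mem.1 with h | h
    · exact h
    · exfalso; rw [← h] at hgu₀; rw [gEx7_one] at hgu₀; linarith [hX.1]
  have hu₀lt : u₀ < 3/2 := by
    rcases lt_or_eq_of_le hu₀mem.2 with h | h
    · exact h
    · exfalso; rw [h, gEx7_threehalf] at hgu₀; linarith [hX.2]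
  rw [ContinuousAt, tendsto_order]
  constructor
  · intro b hb
    set c := max b 1 with hc
    have hc1 : (1:ℝ) ≤ c := le_max_right _ _
    have hcu₀ : c < u₀ := max_lt hb hu₀gt
    have hcmem : c ∈ Icc (1:ℝ) (3/2) := ⟨hc1, by linarith⟩
    have hgc : gEx7 c < X := by
      rw [← hgu₀]; exact hmono hcmem hu₀mem hcu₀
    have hgc0 : 0 ≤ gEx7 c := by
      rw [← gEx7_one]
      rcases eq_or_lt_of_le hc1 with h | h
      · rw [h]
      · exact (hmono ⟨le_refl 1, by norm_num⟩ hcmem h).le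
    filter_upwards [Ioo_mem_nhds hgc hX.2] with X' hX'
    obtain ⟨hmem', hg'⟩ := hinv₂ X' ⟨le_trans hgc0 hX'.1.le, hX'.2.le⟩
    have : c < α X' := by
      by_contra h
      push_neg at h
      rcases eq_or_lt_of_le h with h | h
      · rw [h] at hg'; linarith [hX'.1]
      · have := hmono hmem' hcmem h
        rw [hg'] at this; linarith [hX'.1]
    exact lt_of_le_of_lt (le_max_left b 1) this
  · intro b hb
    set c := min b (3/2) with hc
    have hc1 : c ≤ 3/2 := min_le_right _ _
    have hcu₀ : u₀ < c := lt_min hb hu₀lt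
    have hcmem : c ∈ Icc (1:ℝ) (3/2) := ⟨by linarith, hc1⟩
    have hgc : X < gEx7 c := by
      rw [← hgu₀]; exact hmono hu₀mem hcmem hcu₀
    have hgc34 : gEx7 c ≤ 3/4 := by
      rw [← gEx7_threehalf]
      rcases eq_or_lt_of_le hc1 with h | h
      · rw [h]
      · exact (hmono hcmem ⟨by norm_num, le_refl _⟩ h).le
    filter_upwards [Ioo_mem_nhds hX.1 hgc] with X' hX'
    obtain ⟨hmem', hg'⟩ := hinv₂ X' ⟨hX'.1.le, le_trans hX'.2.le hgc34⟩
    have : α X' < c := by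
      by_contra h
      push_neg at h
      rcases eq_or_lt_of_le h with h | h
      · rw [← h] at hg'; linarith [hX'.2]
      · have := hmono hcmem hmem' h
        rw [hg'] at this; linarith [hX'.2]
    exact lt_of_lt_of_le this (min_le_left b _)


lemma arith_bound {x y u₀ s : ℝ} (hx : 0 < x) (hx8 : x < 1/8)
    (hy34 : 3/4 < y) (hy1 : y < 1) (hu1 : 1 < u₀) (hu13 : u₀ < 13/10)
    (hs_sq : s^2 = (2*u₀-1)*(3-2*u₀)) (hs_pos : 0 < s) (hs_le1 : s ≤ 1)
    (hs_ge : 4/5 ≤ s) (hxy_eq : u₀/2 * (1 - s) = x * y)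
    (hGpos : 0 < (1 - s)/2 + 2*u₀*(u₀-1)/s) :
    1/(169*x) ≤ (y^2 * ((1 - s)/2 + 2*u₀*(u₀-1)/s)⁻¹ / u₀^2)^2 := by
  obtain ⟨G, hG_def⟩ : ∃ G, G = (1 - s)/2 + 2*u₀*(u₀-1)/s := ⟨_, rfl⟩
  rw [← hG_def] at hGpos ⊢
  have ht0 : 0 ≤ u₀ - 1 := by linarith
  have ht2 : (u₀-1)^2 ≤ x * y := by nlinarith
  have ht2x : (u₀-1)^2 ≤ x := by nlinarith
  have ht_sqrt : u₀ - 1 ≤ Real.sqrt x := by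
    rw [show u₀ - 1 = Real.sqrt ((u₀-1)^2) from (Real.sqrt_sq ht0).symm]
    exact Real.sqrt_le_sqrt ht2x
  have hGle : G ≤ 4 * Real.sqrt x := by
    have h2 : 2*u₀*(u₀-1)/s ≤ (13/4)*(u₀-1) := by
      rw [div_le_iff₀ hs_pos]
      nlinarith
    have h1 : (1 - s)/2 ≤ 2*(u₀-1)^2 := by nlinarith
    have ht310 : u₀ - 1 ≤ 3/10 := by linarith
    have h4 : G ≤ 2*(u₀-1)^2 + (13/4)*(u₀-1) := by rw [hG_def]; linarith
    have h5 : 2*(u₀-1)^2 ≤ (3/5)*(u₀-1) := by nlinarith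
    linarith [ht_sqrt, Real.sqrt_nonneg x]
  have hG2 : G^2 ≤ 16 * x := by
    calc G^2 ≤ (4*Real.sqrt x)^2 := pow_le_pow_left₀ hGpos.le hGle 2
    _ = 16*x := by rw [mul_pow, Real.sq_sqrt hx.le]; norm_num
  have hu₀ne : u₀ ≠ 0 := by linarith
  have hD_eq : y^2 * G⁻¹ / u₀^2 = y^2 / (G * u₀^2) := by
    field_simp
  rw [hD_eq, div_pow, div_le_div_iff₀ (by positivity) (by positivity)]
  have hu2 : u₀^2 ≤ (13/10:ℝ)^2 := pow_le_pow_left₀ (by linarith) hu13.le 2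
  have hu4 : (u₀^2)^2 ≤ 28561/10000 := by
    calc (u₀^2)^2 ≤ (((13:ℝ)/10)^2)^2 := pow_le_pow_left₀ (by positivity) hu2 2
    _ = 28561/10000 := by norm_num
  have hy2 : (3/4:ℝ)^2 ≤ y^2 := pow_le_pow_left₀ (by norm_num) hy34.le 2
  have hy4 : (81/256:ℝ) ≤ (y^2)^2 := by
    calc (81/256:ℝ) = (((3:ℝ)/4)^2)^2 := by norm_num
    _ ≤ (y^2)^2 := pow_le_pow_left₀ (by positivity) hy2 2
  have hprod : (G * u₀^2)^2 ≤ (16*x) * (28561/10000) := by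
    have h6 : (G*u₀^2)^2 = G^2 * (u₀^2)^2 := by ring
    rw [h6]
    exact mul_le_mul hG2 hu4 (by positivity) (by linarith)
  have h8 : 81/256*(169*x) ≤ (y^2)^2*(169*x) :=
    mul_le_mul_of_nonneg_right hy4 (by positivity)
  linarith [hprod, h8]


lemma key_bound (α : ℝ → ℝ)
    (hinv₂ : ∀ X ∈ Icc (0:ℝ) (3/4), α X ∈ Icc (1:ℝ) (3/2) ∧ gEx7 (α X) = X)
    {x y : ℝ} (hx : x ∈ Ioo (0:ℝ) (1/8)) (hy : y ∈ Ioo (3/4:ℝ) 1) :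
    ENNReal.ofReal (1/(169 * x)) ≤
      ENNReal.ofReal ((deriv (fun x' => 1 - y / α (x' * y)) x)^2) := by
  have hy0 : 0 < y := by linarith [hy.1]
  have hX : x * y ∈ Ioo (0:ℝ) (3/4) := by
    constructor
    · exact mul_pos hx.1 hy0
    · nlinarith [hx.1, hx.2, hy.2]
  obtain ⟨hu₀mem, hgu₀⟩ := hinv₂ (x*y) ⟨hX.1.le, hX.2.le⟩
  set u₀ := α (x*y) with hu₀def
  have hmono := gEx7_strictMono
  have hu₀gt : 1 < u₀ := by
    rcases lt_or_eq_of_le hu₀mem.1 with h | h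
    · exact h
    · exfalso; rw [← h, gEx7_one] at hgu₀; linarith [hX.1]
  have hg13 : gEx7 (13/10) = 13/100 := by
    have h1 : ((2*(13/10:ℝ)-1)*(3-2*(13/10))) = (4/5)^2 := by norm_num
    unfold gEx7
    rw [h1, Real.sqrt_sq (by norm_num)]
    norm_num
  have hxy18 : x * y < 1/8 := by nlinarith [hx.1, hx.2, hy.2]
  have hu₀lt13 : u₀ < 13/10 := by
    by_contra h
    push_neg at h
    rcases eq_or_lt_of_le h with h | h
    · rw [h, hgu₀] at hg13; linarith
    · have := hmono (by norm_num : (13/10:ℝ) ∈ Icc (1:ℝ) (3/2)) hu₀mem h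
      rw [hgu₀, hg13] at this; linarith
  have hu₀Ioo : u₀ ∈ Ioo (1:ℝ) (3/2) := ⟨hu₀gt, by linarith⟩
  set s := Real.sqrt ((2*u₀-1)*(3-2*u₀)) with hs_def
  have hφpos := phi_pos hu₀Ioo
  have hs_pos : 0 < s := Real.sqrt_pos.2 hφpos
  have hs_sq : s^2 = (2*u₀-1)*(3-2*u₀) := Real.sq_sqrt hφpos.le
  have hs_le1 : s ≤ 1 := Real.sqrt_le_one.mpr (by nlinarith)
  have hs_ge : 4/5 ≤ s := by
    rw [hs_def, show (4/5:ℝ) = Real.sqrt ((4/5)^2) from (Real.sqrt_sq (by norm_num)).symm]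
    exact Real.sqrt_le_sqrt (by nlinarith)
  set G := gEx7' u₀ with hG_def
  have hGpos : 0 < G := gEx7'_pos hu₀Ioo
  have hd : HasDerivAt gEx7 G u₀ := gEx7_hasDerivAt hu₀Ioo
  have hαd : HasDerivAt α G⁻¹ (x*y) := by
    apply HasDerivAt.of_local_left_inverse (alpha_continuousAt α hinv₂ hX) hd hGpos.ne'
    filter_upwards [Ioo_mem_nhds hX.1 hX.2] with X' h
    exact (hinv₂ X' ⟨h.1.le, h.2.le⟩).2
  have hcomp : HasDerivAt (fun x' => α (x' * y)) (G⁻¹ * y) x :=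
    hαd.comp x (hasDerivAt_mul_const y)
  have hu₀ne : u₀ ≠ 0 := by linarith
  have hdiv : HasDerivAt (fun x' => y / α (x' * y))
      ((0 * u₀ - y * (G⁻¹ * y)) / u₀^2) x :=
    (hasDerivAt_const x y).div hcomp hu₀ne
  have hz := hdiv.const_sub 1
  have hderiv_eq : deriv (fun x' => 1 - y / α (x' * y)) x = y^2 * G⁻¹ / u₀^2 := by
    rw [hz.deriv]; ring
  rw [hderiv_eq]
  apply ENNReal.ofReal_le_ofReal
  have hxy_eq : u₀/2 * (1 - s) = x * y := hgu₀
  have hGeq : G = (1 - s)/2 + 2*u₀*(u₀-1)/s := rfl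
  rw [hGeq]
  exact arith_bound hx.1 hx.2 hy.1 hy.2 hu₀gt hu₀lt13 hs_sq hs_pos hs_le1 hs_ge
    hxy_eq (hGeq ▸ hGpos)

open MeasureTheory in
lemma lint_top : ∫⁻ x in Ioo (0:ℝ) (1/8), ENNReal.ofReal (1/(169 * x)) = ⊤ := by
  by_contra h
  have hlt : ∫⁻ x in Ioo (0:ℝ) (1/8), ENNReal.ofReal (1/(169 * x)) < ⊤ :=
    lt_top_iff_ne_top.2 h
  have hmeas : Measurable (fun x : ℝ => 1/(169 * x)) := by
    simp only [one_div]
    exact (measurable_id.const_mul (169:ℝ)).inv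
  have hnn : 0 ≤ᵐ[volume.restrict (Ioo (0:ℝ) (1/8))] (fun x : ℝ => 1/(169 * x)) := by
    have : ∀ᵐ x ∂(volume.restrict (Ioo (0:ℝ) (1/8))), (0:ℝ) ≤ 1/(169 * x) := by
      rw [ae_restrict_iff' measurableSet_Ioo]
      filter_upwards with x hx
      have := hx.1
      positivity
    exact this
  have hfin : HasFiniteIntegral (fun x : ℝ => 1/(169 * x))
      (volume.restrict (Ioo (0:ℝ) (1/8))) :=
    (hasFiniteIntegral_iff_ofReal hnn).2 hlt
  have hint : IntegrableOn (fun x : ℝ => 1/(169 * x)) (Ioo (0:ℝ) (1/8)) :=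
    ⟨hmeas.aestronglyMeasurable, hfin⟩
  have h2 : IntegrableOn (fun x : ℝ => x ^ (-1:ℝ)) (Ioo (0:ℝ) (1/8)) := by
    apply IntegrableOn.congr_fun (hint.const_mul (169:ℝ)) ?_ measurableSet_Ioo
    intro x hx
    have hx0 : (0:ℝ) < x := hx.1
    simp only [Real.rpow_neg_one]
    field_simp
  rw [intervalIntegral.integrableOn_Ioo_rpow_iff (by norm_num : (0:ℝ) < 1/8)] at h2
  linarith

open MeasureTheory in
lemma prod_top :
    ∫⁻ p in (Ioo (0:ℝ) (1/8)) ×ˢ (Ioo (3/4:ℝ) 1),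
      ENNReal.ofReal (1/(169 * p.1)) = ⊤ := by
  rw [Measure.volume_eq_prod, ← Measure.prod_restrict]
  have hf : Measurable (fun x : ℝ => ENNReal.ofReal (1/(169 * x))) := by
    apply Measurable.ennreal_ofReal
    simp only [one_div]
    exact (measurable_id.const_mul (169:ℝ)).inv
  have := lintegral_prod_mul (μ := volume.restrict (Ioo (0:ℝ) (1/8)))
    (ν := volume.restrict (Ioo (3/4:ℝ) 1))
    (f := fun x => ENNReal.ofReal (1/(169 * x))) (g := fun _ => 1)
    hf.aemeasurable aemeasurable_const
  simp only [mul_one, lintegral_one, Measure.restrict_apply_univ] at this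
  rw [this, lint_top, Real.volume_Ioo, ENNReal.top_mul]
  simp only [ne_eq, ENNReal.ofReal_eq_zero, not_le]
  norm_num

/-- The subdomain Ω* = {(x,y) : 3/4 < y < 1, 0 < x < 1/(4y)}. -/
def OmegaStar : Set (ℝ × ℝ) :=
  {p : ℝ × ℝ | 3/4 < p.2 ∧ p.2 < 1 ∧ 0 < p.1 ∧ p.1 < 1 / (4 * p.2)}

theorem stmt_18 (α : ℝ → ℝ)
    (hinv₁ : ∀ y ∈ Icc (1:ℝ) (3/2), α (gEx7 y) = y)
    (hinv₂ : ∀ X ∈ Icc (0:ℝ) (3/4), α X ∈ Icc (1:ℝ) (3/2) ∧ gEx7 (α X) = X) :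
    StrictMonoOn gEx7 (Icc 1 (3/2)) ∧ gEx7 1 = 0 ∧ gEx7 (3/2) = 3/4 ∧
    (∫⁻ p in OmegaStar,
      ENNReal.ofReal
        ((deriv (fun x => 1 - p.2 / α (x * p.2)) p.1) ^ 2) = ⊤) := by
  refine ⟨gEx7_strictMono, gEx7_one, gEx7_threehalf, ?_⟩
  have hsub : (Ioo (0:ℝ) (1/8)) ×ˢ (Ioo (3/4:ℝ) 1) ⊆ OmegaStar := by
    rintro ⟨x, y⟩ ⟨hx, hy⟩
    refine ⟨hy.1, hy.2, hx.1, ?_⟩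
    have h4y : (0:ℝ) < 4 * y := by linarith [hy.1]
    rw [lt_div_iff₀ h4y]
    nlinarith [hx.1, hx.2, hy.1, hy.2]
  refine top_unique ?_
  calc (⊤:ENNReal)
      = ∫⁻ p in (Ioo (0:ℝ) (1/8)) ×ˢ (Ioo (3/4:ℝ) 1),
          ENNReal.ofReal (1/(169 * p.1)) := prod_top.symm
    _ ≤ ∫⁻ p in (Ioo (0:ℝ) (1/8)) ×ˢ (Ioo (3/4:ℝ) 1),
          ENNReal.ofReal ((deriv (fun x => 1 - p.2 / α (x * p.2)) p.1) ^ 2) :=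
        setLIntegral_mono' (measurableSet_Ioo.prod measurableSet_Ioo)
          (fun p hp => key_bound α hinv₂ hp.1 hp.2)
    _ ≤ ∫⁻ p in OmegaStar,
          ENNReal.ofReal ((deriv (fun x => 1 - p.2 / α (x * p.2)) p.1) ^ 2) :=
        lintegral_mono_set hsub
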